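/- arXiv:1010.5795 — 2 statements merged into one kernel-verified Lean document; each statement's English description precedes it below -/
import Mathlib

section
/- The right cylinder over a logarithmic spiral, parameterized in cylindrical coordinates by F(u, z) = (u cos θ · cos(φ(u)), u cos θ · sin(φ(u)), z) with φ(u) = -tan θ · ln(u) + const, makes constant angle θ with the Killing field V = (-y, x, 0): at every point the unit normal N satisfies ⟨N, V⟩ = ‖V‖ cos θ. -/
open Real Set

/-- Dot product on ℝ³ (as ℝ × ℝ × ℝ). -/
noncomputable def dot3 (a b : ℝ × ℝ × ℝ) : ℝ :=
  a.1 * b.1 + a.2.1 * b.2.1 + a.2.2 * b.2.2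

/-- Cross product on ℝ³ (as ℝ × ℝ × ℝ). -/
noncomputable def cross3 (a b : ℝ × ℝ × ℝ) : ℝ × ℝ × ℝ :=
  (a.2.1 * b.2.2 - a.2.2 * b.2.1,
   a.2.2 * b.1 - a.1 * b.2.2,
   a.1 * b.2.1 - a.2.1 * b.1)

/-- Euclidean norm on ℝ³ (as ℝ × ℝ × ℝ). -/
noncomputable def norm3 (a : ℝ × ℝ × ℝ) : ℝ := Real.sqrt (dot3 a a)

lemma key_aux (c s cA sA ru : ℝ) (hcs : s ^ 2 + c ^ 2 = 1) (h2 : sA ^ 2 + cA ^ 2 = 1)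
    (hru : 0 ≤ ru) :
    dot3 ((norm3 (cross3 ((0 : ℝ), (0 : ℝ), (1 : ℝ))
        (c * cA + s * sA, c * sA - s * cA, 0)))⁻¹ •
      cross3 ((0 : ℝ), (0 : ℝ), (1 : ℝ)) (c * cA + s * sA, c * sA - s * cA, 0))
      (-(ru * sA), ru * cA, 0)
    = norm3 (-(ru * sA), ru * cA, 0) * c := by
  have e1 : norm3 (cross3 ((0 : ℝ), (0 : ℝ), (1 : ℝ))
      (c * cA + s * sA, c * sA - s * cA, 0)) = 1 := by
    have h : dot3 (cross3 ((0 : ℝ), (0 : ℝ), (1 : ℝ)) (c * cA + s * sA, c * sA - s * cA, 0))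
        (cross3 ((0 : ℝ), (0 : ℝ), (1 : ℝ)) (c * cA + s * sA, c * sA - s * cA, 0)) = 1 := by
      simp only [dot3, cross3]
      linear_combination (c ^ 2 + s ^ 2) * h2 + hcs
    rw [norm3, h, Real.sqrt_one]
  have e2 : norm3 (-(ru * sA), ru * cA, 0) = ru := by
    have h : dot3 ((-(ru * sA), ru * cA, (0 : ℝ))) ((-(ru * sA), ru * cA, (0 : ℝ))) = ru ^ 2 := by
      simp only [dot3]
      linear_combination ru ^ 2 * h2
    rw [norm3, h, Real.sqrt_sq hru]
  rw [e1, e2, inv_one, one_smul]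
  simp only [dot3, cross3]
  linear_combination ru * c * h2

/-- The right cylinder over the logarithmic spiral
`u ↦ (u cos θ, φ₀ - tan θ ln u)` (in polar coordinates) makes constant angle θ
with `V = (-y, x, 0)`: its unit normal satisfies `⟨N, V⟩ = ‖V‖ cos θ`. -/
theorem stmt_12 (θ φ₀ : ℝ) (hθ : θ ∈ Set.Ioo 0 (π / 2))
    (φf : ℝ → ℝ) (hφf : ∀ u, φf u = -Real.tan θ * Real.log u + φ₀)
    (u z : ℝ) (hu : 0 < u) :
    let r : ℝ → ℝ := fun t => t * Real.cos θ
    let Fu : ℝ × ℝ × ℝ :=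
      (deriv (fun t => r t * Real.cos (φf t)) u,
       deriv (fun t => r t * Real.sin (φf t)) u,
       deriv (fun _ : ℝ => z) u)
    let Fz : ℝ × ℝ × ℝ := (0, 0, 1)
    let N : ℝ × ℝ × ℝ := (norm3 (cross3 Fz Fu))⁻¹ • cross3 Fz Fu
    let V : ℝ × ℝ × ℝ := (-(r u * Real.sin (φf u)), r u * Real.cos (φf u), 0)
    dot3 N V = norm3 V * Real.cos θ := by
  intro r Fu Fz N V
  obtain ⟨hθ1, hθ2⟩ := hθ
  have hu' : u ≠ 0 := hu.ne'
  have hc : 0 < Real.cos θ :=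
    Real.cos_pos_of_mem_Ioo ⟨by linarith [Real.pi_pos], hθ2⟩
  have hφeq : φf = fun t => -Real.tan θ * Real.log t + φ₀ := funext hφf
  subst hφeq
  have hφ : HasDerivAt (fun t => -Real.tan θ * Real.log t + φ₀)
      (-Real.tan θ * u⁻¹) u :=
    ((Real.hasDerivAt_log hu').const_mul (-Real.tan θ)).add_const φ₀
  have htan : Real.tan θ = Real.sin θ / Real.cos θ := Real.tan_eq_sin_div_cos θ
  have hx : deriv (fun t => t * Real.cos θ * Real.cos (-Real.tan θ * Real.log t + φ₀)) u
      = Real.cos θ * Real.cos (-Real.tan θ * Real.log u + φ₀)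
        + Real.sin θ * Real.sin (-Real.tan θ * Real.log u + φ₀) := by
    have h := (((hasDerivAt_id u).mul_const (Real.cos θ)).mul hφ.cos).deriv
    simp only [id_eq, Pi.mul_def] at h
    rw [h, htan]
    field_simp
  have hy : deriv (fun t => t * Real.cos θ * Real.sin (-Real.tan θ * Real.log t + φ₀)) u
      = Real.cos θ * Real.sin (-Real.tan θ * Real.log u + φ₀)
        - Real.sin θ * Real.cos (-Real.tan θ * Real.log u + φ₀) := by
    have h := (((hasDerivAt_id u).mul_const (Real.cos θ)).mul hφ.sin).deriv
    simp only [id_eq, Pi.mul_def] at h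
    rw [h, htan]
    field_simp
    ring
  have hz : deriv (fun _ : ℝ => z) u = 0 := deriv_const u z
  have hcs : Real.sin θ ^ 2 + Real.cos θ ^ 2 = 1 := Real.sin_sq_add_cos_sq θ
  have h2 : Real.sin (-Real.tan θ * Real.log u + φ₀) ^ 2
      + Real.cos (-Real.tan θ * Real.log u + φ₀) ^ 2 = 1 := Real.sin_sq_add_cos_sq _
  simp only [N, V, Fu, Fz, r]
  rw [hx, hy, hz]
  exact key_aux (Real.cos θ) (Real.sin θ) (Real.cos (-Real.tan θ * Real.log u + φ₀))
    (Real.sin (-Real.tan θ * Real.log u + φ₀)) (u * Real.cos θ) hcs h2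
    (mul_nonneg hu.le hc.le)
end

section
/- For Dini's surface F(u,v) with r = (cos θ/c) sin(cu), φ = -(cv₀ tan θ)/cos θ - tan θ ln(tan(cu/2)), z = v₀ - (cos θ/c)cos(cu), the u-parameter curves (v = v₀ fixed) are unit-speed spherical curves lying on the sphere of radius cos θ/c centered at (0, 0, v₀). -/
open Real Set

/-- The u-parameter curves of Dini's surface are unit-speed spherical curves
lying on the sphere of radius `cos θ/c` centered at `(0, 0, v₀)`. -/
theorem stmt_15 (θ c v₀ : ℝ) (hθ : θ ∈ Set.Ioo 0 (π / 2)) (hc : 0 < c)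
    (u : ℝ) (h1 : 0 < Real.sin (c * u)) (h2 : 0 < Real.tan (c * u / 2)) :
    let r : ℝ → ℝ := fun u => Real.cos θ / c * Real.sin (c * u)
    let φ : ℝ → ℝ := fun u =>
      -(c * v₀ * Real.tan θ) / Real.cos θ
        - Real.tan θ * Real.log (Real.tan (c * u / 2))
    let z : ℝ → ℝ := fun u => v₀ - Real.cos θ / c * Real.cos (c * u)
    let X : ℝ → ℝ := fun u => r u * Real.cos (φ u)
    let Y : ℝ → ℝ := fun u => r u * Real.sin (φ u)
    (X u ^ 2 + Y u ^ 2 + (z u - v₀) ^ 2 = (Real.cos θ / c) ^ 2) ∧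
      ((deriv X u) ^ 2 + (deriv Y u) ^ 2 + (deriv z u) ^ 2 = 1) := by
  intro r φ z X Y
  have hcne : c ≠ 0 := ne_of_gt hc
  have hS : Real.sin (c * u) ≠ 0 := ne_of_gt h1
  have hcosθ : Real.cos θ ≠ 0 := by
    have := Real.cos_pos_of_mem_Ioo ⟨lt_trans (by linarith [Real.pi_pos]) hθ.1, hθ.2⟩
    · exact ne_of_gt this
  have hcoshalf : Real.cos (c * u / 2) ≠ 0 := by
    intro h
    rw [Real.tan_eq_sin_div_cos, h, div_zero] at h2
    exact lt_irrefl 0 h2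
  have htanne : Real.tan (c * u / 2) ≠ 0 := ne_of_gt h2
  have hsin2 : Real.sin (c * u) = 2 * Real.sin (c * u / 2) * Real.cos (c * u / 2) := by
    have := Real.sin_two_mul (c * u / 2)
    rw [show 2 * (c * u / 2) = c * u by ring] at this
    exact this
  -- derivatives
  have hcu : HasDerivAt (fun x : ℝ => c * x) c u := by
    simpa using (hasDerivAt_id u).const_mul c
  have hcu2 : HasDerivAt (fun x : ℝ => c * x / 2) (c / 2) u := hcu.div_const 2
  have hr : HasDerivAt r (Real.cos θ * Real.cos (c * u)) u := by
    have := ((Real.hasDerivAt_sin (c * u)).comp u hcu).const_mul (Real.cos θ / c)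
    refine this.congr_deriv ?_
    field_simp
  have hz : HasDerivAt z (Real.cos θ * Real.sin (c * u)) u := by
    have := ((hasDerivAt_const u v₀).sub
      (((Real.hasDerivAt_cos (c * u)).comp u hcu).const_mul (Real.cos θ / c)))
    refine this.congr_deriv ?_
    field_simp
    ring
  have htan : HasDerivAt (fun x : ℝ => Real.tan (c * x / 2))
      (1 / Real.cos (c * u / 2) ^ 2 * (c / 2)) u :=
    by
      have := (Real.hasDerivAt_tan hcoshalf).comp u hcu2
      exact this
  have hsinhalf : Real.sin (c * u / 2) ≠ 0 := by
    intro h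
    rw [hsin2, h] at h1
    simp at h1
  have hlog : HasDerivAt (fun x : ℝ => Real.log (Real.tan (c * x / 2)))
      (c / Real.sin (c * u)) u := by
    have := htan.log htanne
    convert this using 1
    rw [Real.tan_eq_sin_div_cos, hsin2]
    field_simp
  have hφ : HasDerivAt φ (-(Real.tan θ * (c / Real.sin (c * u)))) u := by
    have := (hasDerivAt_const u (-(c * v₀ * Real.tan θ) / Real.cos θ)).sub
      (hlog.const_mul (Real.tan θ))
    refine this.congr_deriv ?_
    ring
  have hcosφ : HasDerivAt (fun x => Real.cos (φ x))
      (-Real.sin (φ u) * (-(Real.tan θ * (c / Real.sin (c * u))))) u :=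
    (Real.hasDerivAt_cos (φ u)).comp u hφ
  have hsinφ : HasDerivAt (fun x => Real.sin (φ x))
      (Real.cos (φ u) * (-(Real.tan θ * (c / Real.sin (c * u))))) u :=
    (Real.hasDerivAt_sin (φ u)).comp u hφ
  have hX : HasDerivAt X (Real.cos θ * Real.cos (c * u) * Real.cos (φ u)
      + r u * (-Real.sin (φ u) * (-(Real.tan θ * (c / Real.sin (c * u)))))) u :=
    hr.mul hcosφ
  have hY : HasDerivAt Y (Real.cos θ * Real.cos (c * u) * Real.sin (φ u)
      + r u * (Real.cos (φ u) * (-(Real.tan θ * (c / Real.sin (c * u)))))) u :=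
    hr.mul hsinφ
  -- simplify r u * φ' = -sin θ
  have hkey : r u * (Real.tan θ * (c / Real.sin (c * u))) = Real.sin θ := by
    show Real.cos θ / c * Real.sin (c * u) * (Real.tan θ * (c / Real.sin (c * u)))
      = Real.sin θ
    rw [Real.tan_eq_sin_div_cos]
    field_simp
  constructor
  · show (Real.cos θ / c * Real.sin (c * u) * Real.cos (φ u)) ^ 2
      + (Real.cos θ / c * Real.sin (c * u) * Real.sin (φ u)) ^ 2
      + (v₀ - Real.cos θ / c * Real.cos (c * u) - v₀) ^ 2 = (Real.cos θ / c) ^ 2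
    have p1 := Real.sin_sq_add_cos_sq (φ u)
    have p2 := Real.sin_sq_add_cos_sq (c * u)
    linear_combination (Real.cos θ / c * Real.sin (c * u)) ^ 2 * p1
      + (Real.cos θ / c) ^ 2 * p2
  · rw [hX.deriv, hY.deriv, hz.deriv]
    have e1 : Real.cos θ * Real.cos (c * u) * Real.cos (φ u)
        + r u * (-Real.sin (φ u) * (-(Real.tan θ * (c / Real.sin (c * u)))))
        = Real.cos θ * Real.cos (c * u) * Real.cos (φ u)
          + Real.sin θ * Real.sin (φ u) := by
      rw [show r u * (-Real.sin (φ u) * (-(Real.tan θ * (c / Real.sin (c * u)))))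
        = Real.sin (φ u) * (r u * (Real.tan θ * (c / Real.sin (c * u)))) by ring, hkey]
      ring
    have e2 : Real.cos θ * Real.cos (c * u) * Real.sin (φ u)
        + r u * (Real.cos (φ u) * (-(Real.tan θ * (c / Real.sin (c * u)))))
        = Real.cos θ * Real.cos (c * u) * Real.sin (φ u)
          - Real.sin θ * Real.cos (φ u) := by
      rw [show r u * (Real.cos (φ u) * (-(Real.tan θ * (c / Real.sin (c * u)))))
        = -(Real.cos (φ u) * (r u * (Real.tan θ * (c / Real.sin (c * u))))) by ring, hkey]
      ring
    rw [e1, e2]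
    have p1 := Real.sin_sq_add_cos_sq (φ u)
    have p2 := Real.sin_sq_add_cos_sq (c * u)
    have p3 := Real.sin_sq_add_cos_sq θ
    linear_combination ((Real.cos θ * Real.cos (c * u)) ^ 2 + Real.sin θ ^ 2) * p1
      + Real.cos θ ^ 2 * p2 + p3
end
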